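/- Let P and Q be finite nonempty posets, and assume P is connected, P is not a chain, and P is neither rooted nor co-rooted. Then the duality condition L(P,Q)^∨ = L(Q,P)^τ holds if and only if Q is a direct sum of chains. -/

import Mathlib

open MvPolynomial

/-- The ideal `L(P,Q)` generated by the monomials `u_φ = ∏_{p∈P} x_{p,φ(p)}`
over all isotone maps `φ : P → Q`. -/
noncomputable def isoL (P Q K : Type*) [PartialOrder P] [PartialOrder Q] [Fintype P]
    [Field K] : Ideal (MvPolynomial (P × Q) K) :=
  Ideal.span { u | ∃ φ : P →o Q, u = ∏ p : P, X (p, φ p) }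

/-- The Alexander dual `L(P,Q)^∨ = ⋂_{φ} (x_{p,φ(p)} : p ∈ P)`. -/
noncomputable def isoDual (P Q K : Type*) [PartialOrder P] [PartialOrder Q]
    [Field K] : Ideal (MvPolynomial (P × Q) K) :=
  ⨅ φ : P →o Q, Ideal.span { u | ∃ p : P, u = X (p, φ p) }

/-- The ideal `L(Q,P)^τ ⊆ K[x_{pq}]` generated by `∏_{q∈Q} x_{ψ(q),q}` for `ψ ∈ Hom(Q,P)`. -/
noncomputable def isoTau (P Q K : Type*) [PartialOrder P] [PartialOrder Q] [Fintype Q]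
    [Field K] : Ideal (MvPolynomial (P × Q) K) :=
  Ideal.span { u | ∃ ψ : Q →o P, u = ∏ q : Q, X (ψ q, q) }

/-- The prime ideal `𝔭_ψ = (x_{ψ(q),q} : q ∈ Q)`. -/
noncomputable def pPsi (P Q K : Type*) [PartialOrder P] [PartialOrder Q]
    [Field K] (ψ : Q →o P) : Ideal (MvPolynomial (P × Q) K) :=
  Ideal.span { u | ∃ q : Q, u = X (ψ q, q) }

/-- The height of an ideal: the infimum of the heights (in the prime spectrum)
of the prime ideals containing it. -/
noncomputable def idealHeight {R : Type*} [CommRing R] (I : Ideal R) : ℕ∞ :=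
  ⨅ J : {J : PrimeSpectrum R // I ≤ J.asIdeal}, Order.height J.1

/-- `P` is connected: any two elements are linked by a chain of comparabilities. -/
def PosetConnected (P : Type*) [PartialOrder P] : Prop :=
  ∀ a b : P, Relation.ReflTransGen (fun x y : P => x ≤ y ∨ y ≤ x) a b

/-- `P` is rooted: two incomparable elements have no common strict upper bound. -/
def Rooted (P : Type*) [PartialOrder P] : Prop :=
  ∀ p₁ p₂ p : P, ¬ p₁ ≤ p₂ → ¬ p₂ ≤ p₁ → ¬ (p₁ < p ∧ p₂ < p)

/-- `P` is co-rooted: two incomparable elements have no common strict lower bound. -/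
def CoRooted (P : Type*) [PartialOrder P] : Prop :=
  ∀ p₁ p₂ p : P, ¬ p₁ ≤ p₂ → ¬ p₂ ≤ p₁ → ¬ (p < p₁ ∧ p < p₂)

/-- `P` is a chain, i.e. totally ordered. -/
def IsChainPoset (P : Type*) [PartialOrder P] : Prop :=
  ∀ a b : P, a ≤ b ∨ b ≤ a

section Comb

variable {P Q : Type*} [PartialOrder P] [PartialOrder Q]

/-- comparability relation -/
def Cmp {α : Type*} [PartialOrder α] (x y : α) : Prop := x ≤ y ∨ y ≤ x

lemma Cmp.refl {α : Type*} [PartialOrder α] (x : α) : Cmp x x := Or.inl le_rfl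

lemma Cmp.symm' {α : Type*} [PartialOrder α] {x y : α} (h : Cmp x y) : Cmp y x := h.symm

lemma cmp_trans {α : Type*} [PartialOrder α] (hr : Rooted α) (hc : CoRooted α) :
    ∀ {x y z : α}, Cmp x y → Cmp y z → Cmp x z := by
  intro x y z hxy hyz
  rcases hxy with h1 | h1 <;> rcases hyz with h2 | h2
  · exact Or.inl (h1.trans h2)
  · by_contra hcon
    rw [Cmp, not_or] at hcon
    rcases eq_or_lt_of_le h1 with rfl | h1'
    · exact hcon.2 h2
    rcases eq_or_lt_of_le h2 with rfl | h2'
    · exact hcon.1 h1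
    exact hr x z y hcon.1 hcon.2 ⟨h1', h2'⟩
  · by_contra hcon
    rw [Cmp, not_or] at hcon
    rcases eq_or_lt_of_le h1 with rfl | h1'
    · exact hcon.1 h2
    rcases eq_or_lt_of_le h2 with rfl | h2'
    · exact hcon.2 h1
    exact hc x z y hcon.1 hcon.2 ⟨h1', h2'⟩
  · exact Or.inr (h2.trans h1)

lemma rtg_cmp {α : Type*} [PartialOrder α] (hr : Rooted α) (hc : CoRooted α) {x y : α}
    (h : Relation.ReflTransGen (fun a b : α => a ≤ b ∨ b ≤ a) x y) : Cmp x y := by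
  induction h with
  | refl => exact Cmp.refl x
  | tail _ h2 ih => exact cmp_trans hr hc ih h2

lemma exists_least {α : Type*} [PartialOrder α] (T : Finset α) (hne : T.Nonempty)
    (hcmp : ∀ x ∈ T, ∀ y ∈ T, Cmp x y) : ∃ m ∈ T, ∀ x ∈ T, m ≤ x := by
  obtain ⟨m, hm, hmin⟩ := T.exists_minimal hne
  refine ⟨m, hm, fun x hx => ?_⟩
  rcases hcmp m hm x hx with h | h
  · exact h
  · rcases eq_or_lt_of_le h with rfl | h'
    · exact le_rfl
    · exact absurd h' (not_lt_of_ge (hmin hx h))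

lemma exists_greatest {α : Type*} [PartialOrder α] (T : Finset α) (hne : T.Nonempty)
    (hcmp : ∀ x ∈ T, ∀ y ∈ T, Cmp x y) : ∃ m ∈ T, ∀ x ∈ T, x ≤ m := by
  obtain ⟨m, hm, hmax⟩ := T.exists_maximal hne
  refine ⟨m, hm, fun x hx => ?_⟩
  rcases hcmp m hm x hx with h | h
  · rcases eq_or_lt_of_le h with h' | h'
    · exact h'.ge
    · exact absurd h' (not_lt_of_ge (hmax hx h))
  · exact h

/-- Cover condition for a set `S ⊆ P × Q`. -/
def CoverS (S : Set (P × Q)) : Prop := ∀ φ : P →o Q, ∃ p, (p, φ p) ∈ S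

/-- `S` contains the (transposed) graph of some isotone map `Q → P`. -/
def ContG (S : Set (P × Q)) : Prop := ∃ ψ : Q →o P, ∀ q, (ψ q, q) ∈ S

/-- Fixed point lemma: if `P` is connected and `Q` is a direct sum of chains then
`φ ∘ ψ : Q → Q` has a fixed point. -/
lemma exists_fixed [Fintype Q] [Nonempty Q] (hconn : PosetConnected P)
    (hr : Rooted Q) (hc : CoRooted Q) (φ : P →o Q) (ψ : Q →o P) :
    ∃ q : Q, φ (ψ q) = q := by
  classical
  set θ : Q → Q := fun q => φ (ψ q) with hθ
  have hmono : Monotone θ := fun a b hab => φ.monotone (ψ.monotone hab)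
  have hcmpθ : ∀ x y : Q, Cmp (θ x) (θ y) := by
    intro x y
    have h1 : Relation.ReflTransGen (fun a b : P => a ≤ b ∨ b ≤ a) (ψ x) (ψ y) := hconn _ _
    have h2 : Relation.ReflTransGen (fun a b : Q => a ≤ b ∨ b ≤ a) (φ (ψ x)) (φ (ψ y)) := by
      refine Relation.ReflTransGen.lift φ ?_ _ _ h1
      intro a b hab
      rcases hab with h | h
      · exact Or.inl (φ.monotone h)
      · exact Or.inr (φ.monotone h)
    exact rtg_cmp hr hc h2
  set F : Finset Q := Finset.image θ Finset.univ with hF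
  have hFne : F.Nonempty := ⟨θ (Classical.arbitrary Q), Finset.mem_image_of_mem _ (Finset.mem_univ _)⟩
  have hFcmp : ∀ x ∈ F, ∀ y ∈ F, Cmp x y := by
    intro x hx y hy
    simp only [hF, Finset.mem_image] at hx hy
    obtain ⟨a, _, rfl⟩ := hx; obtain ⟨b, _, rfl⟩ := hy
    exact hcmpθ a b
  have hθF : ∀ x : Q, θ x ∈ F := fun x => Finset.mem_image_of_mem _ (Finset.mem_univ _)
  obtain ⟨m₀, hm₀F, hm₀⟩ := exists_greatest F hFne hFcmp
  set A : Finset Q := F.filter (fun x => θ x ≤ x) with hA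
  have hAne : A.Nonempty := ⟨m₀, by simp [hA, hm₀F, hm₀ _ (hθF m₀)]⟩
  have hAcmp : ∀ x ∈ A, ∀ y ∈ A, Cmp x y := fun x hx y hy =>
    hFcmp x (Finset.mem_of_mem_filter _ hx) y (Finset.mem_of_mem_filter _ hy)
  obtain ⟨m, hmA, hmle⟩ := exists_least A hAne hAcmp
  have hm1 : θ m ≤ m := (Finset.mem_filter.mp hmA).2
  have hm2 : θ m ∈ A := by
    refine Finset.mem_filter.mpr ⟨hθF m, hmono hm1⟩
  have hm3 : m ≤ θ m := hmle _ hm2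
  exact ⟨m, le_antisymm hm1 hm3⟩

end Comb

section CoverB

variable {P Q : Type*} [PartialOrder P] [PartialOrder Q]

lemma cover_to_graph [Fintype P] [Fintype Q] [Nonempty P]
    (hr : Rooted Q) (hc : CoRooted Q) (S : Set (P × Q)) (hcov : CoverS S) : ContG S := by
  classical
  -- comparability class
  set Cl : Q → Set Q := fun q => {x | Cmp q x} with hCl
  have hclass : ∀ q q' : Q, Cmp q q' → Cl q = Cl q' := by
    intro q q' h
    ext x
    constructor
    · intro hx; exact cmp_trans hr hc h.symm' hx
    · intro hx; exact cmp_trans hr hc h hx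
  have hmemCl : ∀ q : Q, q ∈ Cl q := fun q => Cmp.refl q
  have hclcmp : ∀ q : Q, ∀ x ∈ Cl q, ∀ y ∈ Cl q, Cmp x y := by
    intro q x hx y hy
    exact cmp_trans hr hc (Cmp.symm' hx) hy
  -- Goodness of a selection on a class
  set Good : Set Q → (Q → P) → Prop := fun C f =>
    (∀ x ∈ C, ∀ y ∈ C, x ≤ y → f x ≤ f y) ∧ ∀ x ∈ C, (f x, x) ∈ S with hGood
  -- key claim: every class admits a good selection
  have key : ∀ q₀ : Q, ∃ f : Q → P, Good (Cl q₀) f := by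
    intro q₀
    by_contra hno
    push_neg at hno
    -- the sets A c
    set A : Q → Set P := fun c => {p | ∃ f : Q → P,
      (∀ x ∈ Cl q₀, x ≤ c → ∀ y ∈ Cl q₀, y ≤ c → x ≤ y → f x ≤ f y) ∧
      (∀ x ∈ Cl q₀, x ≤ c → (f x, x) ∈ S) ∧ f c ≤ p} with hAdef
    have hup : ∀ c : Q, ∀ p p' : P, p ∈ A c → p ≤ p' → p' ∈ A c := by
      rintro c p p' ⟨f, h1, h2, h3⟩ hpp'
      exact ⟨f, h1, h2, h3.trans hpp'⟩
    -- the class as a finset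
    set Cfin : Finset Q := Finset.univ.filter (· ∈ Cl q₀) with hCfin
    have hCfinne : Cfin.Nonempty := ⟨q₀, by simp [hCfin, hmemCl q₀]⟩
    have hCfincmp : ∀ x ∈ Cfin, ∀ y ∈ Cfin, Cmp x y := by
      intro x hx y hy
      simp only [hCfin, Finset.mem_filter] at hx hy
      exact hclcmp q₀ x hx.2 y hy.2
    -- for each p there is c in the class with p ∉ A c
    have hTne : ∀ p : P, ∃ c ∈ Cl q₀, p ∉ A c := by
      intro p
      by_contra hcon
      push_neg at hcon
      obtain ⟨cs, hcsF, hcsmax⟩ := exists_greatest Cfin hCfinne hCfincmp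
      have hcsCl : cs ∈ Cl q₀ := by
        simpa [hCfin] using (Finset.mem_filter.mp hcsF).2
      obtain ⟨f, h1, h2, _⟩ := hcon cs hcsCl
      refine hno f ⟨?_, ?_⟩
      · intro x hx y hy hxy
        exact h1 x hx (hcsmax x (by simp [hCfin, hx])) y hy (hcsmax y (by simp [hCfin, hy])) hxy
      · intro x hx
        exact h2 x hx (hcsmax x (by simp [hCfin, hx]))
    -- define T and the map φ0
    set T : P → Finset Q := fun p => Finset.univ.filter (fun c => c ∈ Cl q₀ ∧ p ∉ A c) with hT
    have hTne' : ∀ p : P, (T p).Nonempty := by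
      intro p
      obtain ⟨c, hc1, hc2⟩ := hTne p
      exact ⟨c, by simp [hT, hc1, hc2]⟩
    have hTcmp : ∀ p : P, ∀ x ∈ T p, ∀ y ∈ T p, Cmp x y := by
      intro p x hx y hy
      simp only [hT, Finset.mem_filter] at hx hy
      exact hclcmp q₀ x hx.2.1 y hy.2.1
    have hφex : ∀ p : P, ∃ m ∈ T p, ∀ x ∈ T p, m ≤ x := fun p =>
      exists_least (T p) (hTne' p) (hTcmp p)
    set φ0 : P → Q := fun p => (hφex p).choose with hφ0
    have hφmem : ∀ p : P, φ0 p ∈ T p := fun p => (hφex p).choose_spec.1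
    have hφleast : ∀ p : P, ∀ x ∈ T p, φ0 p ≤ x := fun p => (hφex p).choose_spec.2
    have hφCl : ∀ p : P, φ0 p ∈ Cl q₀ := by
      intro p
      have := hφmem p
      simp only [hT, Finset.mem_filter] at this
      exact this.2.1
    have hφA : ∀ p : P, p ∉ A (φ0 p) := by
      intro p
      have := hφmem p
      simp only [hT, Finset.mem_filter] at this
      exact this.2.2
    have hφmono : Monotone φ0 := by
      intro p p' hpp'
      refine hφleast p (φ0 p') ?_
      have h := hφmem p'
      simp only [hT, Finset.mem_filter] at h ⊢
      refine ⟨Finset.mem_univ _, h.2.1, fun hp => h.2.2 (hup _ p p' hp hpp')⟩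
    -- avoid S
    have havoid : ∀ p : P, (p, φ0 p) ∉ S := by
      intro p hS
      apply hφA p
      set c : Q := φ0 p with hcdef
      set D : Finset Q := Finset.univ.filter (fun x => x ∈ Cl q₀ ∧ x < c) with hD
      by_cases hDne : D.Nonempty
      · -- pick greatest element below c
        have hDcmp : ∀ x ∈ D, ∀ y ∈ D, Cmp x y := by
          intro x hx y hy
          simp only [hD, Finset.mem_filter] at hx hy
          exact hclcmp q₀ x hx.2.1 y hy.2.1
        obtain ⟨cm, hcmD, hcmmax⟩ := exists_greatest D hDne hDcmp
        have hcmCl : cm ∈ Cl q₀ := by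
          have := hcmD; simp only [hD, Finset.mem_filter] at this; exact this.2.1
        have hcmlt : cm < c := by
          have := hcmD; simp only [hD, Finset.mem_filter] at this; exact this.2.2
        have hcmA : p ∈ A cm := by
          by_contra hcon
          have : cm ∈ T p := by simp [hT, hcmCl, hcon]
          have := hφleast p cm this
          exact absurd (lt_of_le_of_lt this hcmlt) (lt_irrefl _)
        obtain ⟨g, hg1, hg2, hg3⟩ := hcmA
        refine ⟨fun x => if x = c then p else g x, ?_, ?_, ?_⟩
        · intro x hx hxc y hy hyc hxy
          by_cases hyec : y = c
          · subst hyec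
            by_cases hxec : x = c
            · subst hxec; simp
            · have hxlt : x < c := lt_of_le_of_ne hxy hxec
              have hxD : x ∈ D := by simp [hD, hx, hxlt]
              have hxcm : x ≤ cm := hcmmax x hxD
              simp only [hxec, if_false, if_pos rfl]
              exact (hg1 x hx hxcm cm hcmCl le_rfl hxcm).trans hg3
          · have hylt : y < c := lt_of_le_of_ne hyc hyec
            have hyD : y ∈ D := by simp [hD, hy, hylt]
            have hycm : y ≤ cm := hcmmax y hyD
            have hxec : x ≠ c := by
              rintro rfl
              exact absurd (lt_of_le_of_lt hxy hylt) (lt_irrefl _)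
            simp only [hxec, hyec, if_false]
            exact hg1 x hx (hxy.trans hycm) y hy hycm hxy
        · intro x hx hxc
          by_cases hxec : x = c
          · subst hxec; simpa using hS
          · have hxlt : x < c := lt_of_le_of_ne hxc hxec
            have hxD : x ∈ D := by simp [hD, hx, hxlt]
            simp only [hxec, if_false]
            exact hg2 x hx (hcmmax x hxD)
        · simp
      · -- D empty: constant selection
        refine ⟨fun _ => p, ?_, ?_, le_rfl⟩
        · intro x _ _ y _ _ _; exact le_rfl
        · intro x hx hxc
          rcases eq_or_lt_of_le hxc with rfl | hlt
          · exact hS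
          · exact absurd ⟨x, by simp [hD, hx, hlt]⟩ hDne
    -- contradiction with cover
    obtain ⟨p, hp⟩ := hcov ⟨φ0, hφmono⟩
    exact havoid p hp
  -- glue the selections
  set sel : Set Q → (Q → P) := fun C =>
    if h : ∃ f : Q → P, Good C f then h.choose else fun _ => Classical.arbitrary P with hsel
  have hselGood : ∀ q : Q, Good (Cl q) (sel (Cl q)) := by
    intro q
    have h : ∃ f : Q → P, Good (Cl q) f := key q
    simp only [hsel, dif_pos h]
    exact h.choose_spec
  have hmono : Monotone (fun q => sel (Cl q) q) := by
    intro q q' hqq'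
    have hcl : Cl q = Cl q' := hclass q q' (Or.inl hqq')
    simp only
    rw [← hcl]
    exact (hselGood q).1 q (hmemCl q) q' (hcl ▸ hmemCl q') hqq'
  refine ⟨⟨fun q => sel (Cl q) q, hmono⟩, fun q => (hselGood q).2 q (hmemCl q)⟩

end CoverB

section Bad

variable {P Q : Type*} [PartialOrder P] [PartialOrder Q]

lemma bad_notRooted (hQ : ¬ Rooted Q) (hP : ¬ CoRooted P) :
    ∃ S : Set (P × Q), CoverS S ∧ ¬ ContG S := by
  rw [Rooted] at hQ; push_neg at hQ
  obtain ⟨q₁, q₂, q₃, hq12, hq21, hq13, hq23⟩ := hQ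
  rw [CoRooted] at hP; push_neg at hP
  obtain ⟨s₁, s₂, s₃, hs12, hs21, hs31, hs32⟩ := hP
  refine ⟨{pr | (pr.2 = q₁ → pr.1 = s₁) ∧ (pr.2 = q₂ → pr.1 = s₂) ∧
      (pr.2 = q₃ → ¬ (s₁ ≤ pr.1 ∧ s₂ ≤ pr.1))}, ?_, ?_⟩
  · intro φ
    by_contra hcon
    push_neg at hcon
    have hA : φ s₁ = q₂ := by
      have h1 := hcon s₁
      simp only [Set.mem_setOf_eq, not_and_or] at h1
      push_neg at h1
      rcases h1 with h | h | h
      · exact h.2.elim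
      · exact h.1
      · exact absurd h.2.2 hs21
    have hB : φ s₂ = q₁ := by
      have h1 := hcon s₂
      simp only [Set.mem_setOf_eq, not_and_or] at h1
      push_neg at h1
      rcases h1 with h | h | h
      · exact h.1
      · exact h.2.elim
      · exact absurd h.2.1 hs12
    have h1 := hcon s₃
    simp only [Set.mem_setOf_eq, not_and_or] at h1
    push_neg at h1
    have hm1 : φ s₃ ≤ q₂ := hA ▸ φ.monotone hs31.le
    have hm2 : φ s₃ ≤ q₁ := hB ▸ φ.monotone hs32.le
    rcases h1 with h | h | h
    · exact hq12 (h.1 ▸ hm1)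
    · exact hq21 (h.1 ▸ hm2)
    · exact absurd (h.1 ▸ hm1) (not_le_of_gt hq23)
  · rintro ⟨ψ, hψ⟩
    have e1 : ψ q₁ = s₁ := (hψ q₁).1 rfl
    have e2 : ψ q₂ = s₂ := (hψ q₂).2.1 rfl
    exact (hψ q₃).2.2 rfl ⟨e1 ▸ ψ.monotone hq13.le, e2 ▸ ψ.monotone hq23.le⟩

lemma bad_notCoRooted (hQ : ¬ CoRooted Q) (hP : ¬ Rooted P) :
    ∃ S : Set (P × Q), CoverS S ∧ ¬ ContG S := by
  rw [CoRooted] at hQ; push_neg at hQ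
  obtain ⟨q₁, q₂, q₃, hq12, hq21, hq31, hq32⟩ := hQ
  rw [Rooted] at hP; push_neg at hP
  obtain ⟨s₁, s₂, s₃, hs12, hs21, hs13, hs23⟩ := hP
  refine ⟨{pr | (pr.2 = q₁ → pr.1 = s₁) ∧ (pr.2 = q₂ → pr.1 = s₂) ∧
      (pr.2 = q₃ → ¬ (pr.1 ≤ s₁ ∧ pr.1 ≤ s₂))}, ?_, ?_⟩
  · intro φ
    by_contra hcon
    push_neg at hcon
    have hA : φ s₁ = q₂ := by
      have h1 := hcon s₁
      simp only [Set.mem_setOf_eq, not_and_or] at h1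
      push_neg at h1
      rcases h1 with h | h | h
      · exact h.2.elim
      · exact h.1
      · exact absurd h.2.2 hs12
    have hB : φ s₂ = q₁ := by
      have h1 := hcon s₂
      simp only [Set.mem_setOf_eq, not_and_or] at h1
      push_neg at h1
      rcases h1 with h | h | h
      · exact h.1
      · exact h.2.elim
      · exact absurd h.2.1 hs21
    have h1 := hcon s₃
    simp only [Set.mem_setOf_eq, not_and_or] at h1
    push_neg at h1
    have hm1 : q₂ ≤ φ s₃ := hA ▸ φ.monotone hs13.le
    have hm2 : q₁ ≤ φ s₃ := hB ▸ φ.monotone hs23.le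
    rcases h1 with h | h | h
    · exact hq21 (h.1 ▸ hm1)
    · exact hq12 (h.1 ▸ hm2)
    · exact absurd h.2.1 (not_le_of_gt hs13)
  · rintro ⟨ψ, hψ⟩
    have e1 : ψ q₁ = s₁ := (hψ q₁).1 rfl
    have e2 : ψ q₂ = s₂ := (hψ q₂).2.1 rfl
    exact (hψ q₃).2.2 rfl ⟨e1 ▸ ψ.monotone hq31.le, e2 ▸ ψ.monotone hq32.le⟩

end Bad

section Alg

variable {σ : Type*} {K : Type*} [Field K]

lemma prod_X_eq_monomial' {ι : Type*} (s : Finset ι) (f : ι → σ) :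
    (∏ i ∈ s, (X (f i) : MvPolynomial σ K)) =
      monomial (∑ i ∈ s, Finsupp.single (f i) 1) 1 := by
  classical
  induction s using Finset.cons_induction with
  | empty => simp
  | cons a s ha ih =>
      rw [Finset.prod_cons, Finset.sum_cons, ih, X, monomial_mul, one_mul]

end Alg

section Bridge

variable (P Q K : Type*) [PartialOrder P] [PartialOrder Q] [Fintype P] [Fintype Q]
  [Nonempty P] [Nonempty Q] [Field K]

/-- evaluation of the exponent vector of the `ψ`-monomial -/
lemma dpsi_apply [DecidableEq P] (ψ : Q →o P) (p : P) (x : Q) :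
    (∑ q : Q, Finsupp.single ((ψ q, q) : P × Q) (1 : ℕ)) (p, x)
      = if ψ x = p then 1 else 0 := by
  classical
  rw [Finsupp.finset_sum_apply]
  rw [Finset.sum_eq_single x]
  · rw [Finsupp.single_apply]
    by_cases h : ψ x = p
    · simp [h]
    · simp [h, Prod.ext_iff]
  · intro b _ hbx
    rw [Finsupp.single_apply, if_neg]
    intro hcon
    exact hbx (congrArg Prod.snd hcon)
  · intro h; exact absurd (Finset.mem_univ x) h

lemma mem_isoDual_iff (f : MvPolynomial (P × Q) K) :
    f ∈ isoDual P Q K ↔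
      ∀ φ : P →o Q, ∀ m ∈ f.support, ∃ p : P, m (p, φ p) ≠ 0 := by
  rw [isoDual, Submodule.mem_iInf]
  refine forall_congr' fun φ => ?_
  have hset : { u : MvPolynomial (P × Q) K | ∃ p : P, u = X (p, φ p) }
      = MvPolynomial.X '' {i : P × Q | ∃ p : P, i = (p, φ p)} := by
    ext u
    constructor
    · rintro ⟨p, rfl⟩; exact ⟨(p, φ p), ⟨p, rfl⟩, rfl⟩
    · rintro ⟨i, ⟨p, rfl⟩, rfl⟩; exact ⟨p, rfl⟩
  rw [hset, mem_ideal_span_X_image]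
  constructor
  · intro h m hm
    obtain ⟨i, ⟨p, rfl⟩, hi⟩ := h m hm
    exact ⟨p, hi⟩
  · intro h m hm
    obtain ⟨p, hp⟩ := h m hm
    exact ⟨(p, φ p), ⟨p, rfl⟩, hp⟩

lemma mem_isoTau_iff (f : MvPolynomial (P × Q) K) :
    f ∈ isoTau P Q K ↔
      ∀ m ∈ f.support, ∃ ψ : Q →o P, ∀ q : Q, m (ψ q, q) ≠ 0 := by
  classical
  have hset : { u : MvPolynomial (P × Q) K | ∃ ψ : Q →o P, u = ∏ q : Q, X (ψ q, q) }
      = (fun d => monomial d (1 : K)) ''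
          {d : (P × Q) →₀ ℕ | ∃ ψ : Q →o P, d = ∑ q : Q, Finsupp.single (ψ q, q) 1} := by
    ext u
    constructor
    · rintro ⟨ψ, rfl⟩
      exact ⟨∑ q : Q, Finsupp.single (ψ q, q) 1, ⟨ψ, rfl⟩,
        (prod_X_eq_monomial' Finset.univ (fun q : Q => ((ψ q, q) : P × Q))).symm⟩
    · rintro ⟨d, ⟨ψ, rfl⟩, rfl⟩
      exact ⟨ψ, (prod_X_eq_monomial' Finset.univ (fun q : Q => ((ψ q, q) : P × Q))).symm⟩
  rw [isoTau, hset, mem_ideal_span_monomial_image]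
  refine forall₂_congr fun m hm => ?_
  constructor
  · rintro ⟨d, ⟨ψ, rfl⟩, hd⟩
    refine ⟨ψ, fun q => ?_⟩
    have h1 := hd (ψ q, q)
    rw [dpsi_apply P Q ψ (ψ q) q, if_pos rfl] at h1
    omega
  · rintro ⟨ψ, hψ⟩
    refine ⟨∑ q : Q, Finsupp.single (ψ q, q) 1, ⟨ψ, rfl⟩, fun i => ?_⟩
    obtain ⟨p, x⟩ := i
    rw [dpsi_apply P Q ψ p x]
    by_cases h : ψ x = p
    · rw [if_pos h]
      have := hψ x
      rw [h] at this
      omega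
    · simp [h]

end Bridge

/-- If `P` is connected, not a chain, and neither rooted nor co-rooted,
then `L(P,Q)^∨ = L(Q,P)^τ` iff `Q` is a direct sum of chains (i.e. rooted and co-rooted). -/
theorem stmt_7 (P Q K : Type*) [PartialOrder P] [PartialOrder Q]
    [Fintype P] [Fintype Q] [Nonempty P] [Nonempty Q] [Field K]
    (hconn : PosetConnected P) (hchain : ¬ IsChainPoset P)
    (hroot : ¬ Rooted P) (hcoroot : ¬ CoRooted P) :
    isoDual P Q K = isoTau P Q K ↔ (Rooted Q ∧ CoRooted Q) := by
  classical
  constructor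
  · intro heq
    by_contra hQ
    rw [not_and_or] at hQ
    have hbad : ∃ S : Set (P × Q), CoverS S ∧ ¬ ContG S := by
      rcases hQ with h | h
      · exact bad_notRooted h hcoroot
      · exact bad_notCoRooted h hroot
    obtain ⟨S, hcov, hng⟩ := hbad
    set d : (P × Q) →₀ ℕ :=
      Finsupp.equivFunOnFinite.symm (fun i => if i ∈ S then 1 else 0) with hd
    have hdapp : ∀ i, d i = if i ∈ S then 1 else 0 := fun i => by
      rw [hd]; rfl
    have hmem : monomial d (1 : K) ∈ isoDual P Q K := by
      rw [mem_isoDual_iff]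
      intro φ m hm
      rw [support_monomial, if_neg one_ne_zero, Finset.mem_singleton] at hm
      subst hm
      obtain ⟨p, hp⟩ := hcov φ
      exact ⟨p, by rw [hdapp, if_pos hp]; exact one_ne_zero⟩
    rw [heq, mem_isoTau_iff] at hmem
    have hd_supp : d ∈ (monomial d (1 : K)).support := by
      rw [support_monomial, if_neg one_ne_zero]
      exact Finset.mem_singleton_self d
    obtain ⟨ψ, hψ⟩ := hmem d hd_supp
    refine hng ⟨ψ, fun q => ?_⟩
    have h := hψ q
    rw [hdapp] at h
    by_contra hns
    rw [if_neg hns] at h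
    exact h rfl
  · rintro ⟨hr, hc⟩
    apply le_antisymm
    · intro f hf
      rw [mem_isoTau_iff]
      intro m hm
      have hcov : CoverS {i : P × Q | m i ≠ 0} := by
        intro φ
        obtain ⟨p, hp⟩ := (mem_isoDual_iff P Q K f).mp hf φ m hm
        exact ⟨p, hp⟩
      obtain ⟨ψ, hψ⟩ := cover_to_graph hr hc _ hcov
      exact ⟨ψ, hψ⟩
    · rw [isoTau, Ideal.span_le]
      rintro u ⟨ψ, rfl⟩
      have hmem : (∏ q : Q, (X (ψ q, q) : MvPolynomial (P × Q) K)) ∈ isoDual P Q K := by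
        rw [mem_isoDual_iff]
        intro φ m hm
        rw [prod_X_eq_monomial' Finset.univ (fun q : Q => ((ψ q, q) : P × Q)),
          support_monomial, if_neg one_ne_zero, Finset.mem_singleton] at hm
        subst hm
        obtain ⟨q, hq⟩ := exists_fixed hconn hr hc φ ψ
        refine ⟨ψ q, ?_⟩
        rw [hq, dpsi_apply P Q ψ (ψ q) q, if_pos rfl]
        exact one_ne_zero
      exact hmem
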